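/- arXiv:2507.05990 — 3 statements merged into one kernel-verified Lean document; each statement's English description precedes it below -/
import Mathlib

section
/- If Z = Y ⊙ W entrywise, where the rows of W are i.i.d. random vectors independent of Y with E[W W^⊤] having all entries nonzero, then the surrogate estimator Ŝ_yy := (1/n) Z^⊤ Z ⊘ E[W W^⊤] (entrywise division) is an unbiased estimator of E[Y Y^⊤], i.e., E[Ŝ_yy] = E[(1/n) Y^⊤ Y]. -/
open MeasureTheory ProbabilityTheory

/-- If `Z = Y ⊙ W` entrywise, where the rows of `W` are i.i.d. random vectors independent of
`Y` with `E[W W^⊤]` having all entries nonzero, then the surrogate estimator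
`Ŝ_yy := (1/n) Zᵀ Z ⊘ E[W Wᵀ]` (entrywise division) is an unbiased estimator of
`E[Yᵀ Y]/n`, entrywise. -/
theorem surrogate_Syy_unbiased
    {Ω : Type*} [MeasurableSpace Ω] (μ : Measure Ω) [IsProbabilityMeasure μ]
    {n q : ℕ}
    (Y W Z : Ω → Fin n → Fin q → ℝ)
    (M : Fin q → Fin q → ℝ)
    (hM : ∀ j k, M j k ≠ 0)
    -- `W` is independent of `Y`
    (hIndep : IndepFun W Y μ)
    -- the rows of `W` are i.i.d. copies of a random vector `W̃` with `E[W̃ W̃ᵀ] = M`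
    (hW2 : ∀ (i : Fin n) (j k : Fin q), ∫ ω, W ω i j * W ω i k ∂μ = M j k)
    (hIntY : ∀ (i : Fin n) (j k : Fin q), Integrable (fun ω => Y ω i j * Y ω i k) μ)
    (hIntW : ∀ (i : Fin n) (j k : Fin q), Integrable (fun ω => W ω i j * W ω i k) μ)
    (hZ : ∀ ω i j, Z ω i j = Y ω i j * W ω i j) :
    ∀ j k, (∫ ω, ((1 : ℝ) / n) * (∑ i, Z ω i j * Z ω i k) / M j k ∂μ)
        = ∫ ω, ((1 : ℝ) / n) * (∑ i, Y ω i j * Y ω i k) ∂μ := by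
  intro j k
  have hindep : ∀ i : Fin n,
      IndepFun (fun ω => W ω i j * W ω i k) (fun ω => Y ω i j * Y ω i k) μ := by
    intro i
    have hφ : Measurable (fun x : Fin n → Fin q → ℝ => x i j * x i k) := by measurability
    exact hIndep.comp hφ hφ
  have hae : ∀ i : Fin n,
      (fun ω => W ω i j * W ω i k) * (fun ω => Y ω i j * Y ω i k)
        =ᵐ[μ] fun ω => Z ω i j * Z ω i k := by
    intro i
    filter_upwards with ω
    simp only [Pi.mul_apply, hZ]
    ring
  have hIntZ : ∀ i : Fin n, Integrable (fun ω => Z ω i j * Z ω i k) μ := fun i =>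
    (((hindep i).integrable_mul (hIntW i j k) (hIntY i j k)).congr (hae i))
  have key : ∀ i : Fin n,
      ∫ ω, Z ω i j * Z ω i k ∂μ = (∫ ω, Y ω i j * Y ω i k ∂μ) * M j k := by
    intro i
    have hmul := (hindep i).integral_mul_eq_mul_integral (hIntW i j k).aestronglyMeasurable (hIntY i j k).aestronglyMeasurable
    calc ∫ ω, Z ω i j * Z ω i k ∂μ
        = ∫ ω, ((fun ω => W ω i j * W ω i k) * (fun ω => Y ω i j * Y ω i k)) ω ∂μ :=
          (integral_congr_ae (hae i)).symm
      _ = (∫ ω, W ω i j * W ω i k ∂μ) * ∫ ω, Y ω i j * Y ω i k ∂μ := hmul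
      _ = (∫ ω, Y ω i j * Y ω i k ∂μ) * M j k := by rw [hW2 i j k]; ring
  calc ∫ ω, (1 : ℝ) / n * (∑ i, Z ω i j * Z ω i k) / M j k ∂μ
      = (∫ ω, (1 : ℝ) / n * (∑ i, Z ω i j * Z ω i k) ∂μ) / M j k := integral_div _ _
    _ = ((1 : ℝ) / n * ∫ ω, ∑ i, Z ω i j * Z ω i k ∂μ) / M j k := by
        rw [integral_const_mul]
    _ = ((1 : ℝ) / n * ∑ i, ∫ ω, Z ω i j * Z ω i k ∂μ) / M j k := by
        rw [integral_finset_sum _ (fun i _ => hIntZ i)]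
    _ = ((1 : ℝ) / n * ∑ i, (∫ ω, Y ω i j * Y ω i k ∂μ) * M j k) / M j k := by
        simp_rw [key]
    _ = (1 : ℝ) / n * ∑ i, ∫ ω, Y ω i j * Y ω i k ∂μ := by
        rw [← Finset.sum_mul, mul_div_assoc, mul_div_cancel_right₀ _ (hM j k)]
    _ = ∫ ω, (1 : ℝ) / n * (∑ i, Y ω i j * Y ω i k) ∂μ := by
        rw [integral_const_mul, integral_finset_sum _ (fun i _ => hIntY i j k)]
end

section
/- Let β̂ minimize β ↦ (1/2)β^⊤ S_xx β − s^⊤ β + λ‖β‖₁ over ℝ^p, where S_xx is positive semi-definite. Let β* be supported on S ⊆ {1,…,p}, set δ = β̂ − β*, and suppose ‖s − S_xx β*‖_∞ ≤ λ/2. Then (1/2) δ^⊤ S_xx δ ≤ (3λ/2)‖δ_S‖₁ − (λ/2)‖δ_{S^c}‖₁; in particular δ lies in the cone {δ : ‖δ_{S^c}‖₁ ≤ 3 ‖δ_S‖₁}. -/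
open Matrix

/-- The vector ℓ¹ norm. -/
noncomputable def l1 {p : ℕ} (v : Fin p → ℝ) : ℝ := ∑ i, |v i|

/-- `restr v S` agrees with `v` on `S` and is zero outside `S`. -/
def restr {p : ℕ} (v : Fin p → ℝ) (S : Finset (Fin p)) : Fin p → ℝ :=
  fun i => if i ∈ S then v i else 0

lemma l1_restr_eq {p : ℕ} (v : Fin p → ℝ) (S : Finset (Fin p)) :
    l1 (restr v S) = ∑ i ∈ S, |v i| := by
  unfold l1 restr
  rw [← Finset.sum_subset (Finset.subset_univ S)]
  · exact Finset.sum_congr rfl (fun i hi => by simp [hi])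
  · intro i _ hi; simp [hi]

/-- Basic inequality of the Lasso: if `β̂` minimizes
`β ↦ (1/2)βᵀ S_xx β − sᵀβ + λ‖β‖₁` with `S_xx` PSD, `β*` is supported on `S`, and
`‖s − S_xx β*‖_∞ ≤ λ/2`, then with `δ = β̂ − β*`,
`(1/2) δᵀ S_xx δ ≤ (3λ/2)‖δ_S‖₁ − (λ/2)‖δ_{Sᶜ}‖₁`; in particular
`‖δ_{Sᶜ}‖₁ ≤ 3‖δ_S‖₁`. -/
theorem lasso_basic_inequality {p : ℕ}
    (Sxx : Matrix (Fin p) (Fin p) ℝ) (hPSD : Sxx.PosSemidef)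
    (s : Fin p → ℝ) (lam : ℝ) (hlam : 0 < lam)
    (S : Finset (Fin p))
    (βstar βhat : Fin p → ℝ)
    (hsupp : ∀ j, j ∉ S → βstar j = 0)
    (hmin : ∀ β : Fin p → ℝ,
      (1 / 2) * (βhat ⬝ᵥ (Sxx *ᵥ βhat)) - s ⬝ᵥ βhat + lam * l1 βhat ≤
        (1 / 2) * (β ⬝ᵥ (Sxx *ᵥ β)) - s ⬝ᵥ β + lam * l1 β)
    (hdual : ∀ i, |s i - (Sxx *ᵥ βstar) i| ≤ lam / 2) :
    (1 / 2) * ((βhat - βstar) ⬝ᵥ (Sxx *ᵥ (βhat - βstar))) ≤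
        (3 * lam / 2) * l1 (restr (βhat - βstar) S)
          - (lam / 2) * l1 (restr (βhat - βstar) Sᶜ) ∧
      l1 (restr (βhat - βstar) Sᶜ) ≤ 3 * l1 (restr (βhat - βstar) S) := by
  set δ : Fin p → ℝ := βhat - βstar with hδ
  have hδap : ∀ i, δ i = βhat i - βstar i := fun i => rfl
  set a := l1 (restr δ S) with ha
  set b := l1 (restr δ Sᶜ) with hb
  have haS : a = ∑ i ∈ S, |δ i| := l1_restr_eq δ S
  have hbS : b = ∑ i ∈ Sᶜ, |δ i| := l1_restr_eq δ Sᶜ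
  -- symmetry
  have hsym : βstar ⬝ᵥ (Sxx *ᵥ βhat) = βhat ⬝ᵥ (Sxx *ᵥ βstar) := by
    rw [dotProduct_mulVec, ← mulVec_transpose]
    have : Sxxᵀ = Sxx := by
      have := hPSD.1
      simpa [Matrix.IsHermitian, conjTranspose_eq_transpose_of_trivial] using this
    rw [this, dotProduct_comm]
  -- expansion of quadratic form
  have expand : δ ⬝ᵥ (Sxx *ᵥ δ) =
      βhat ⬝ᵥ (Sxx *ᵥ βhat) - 2 * (βhat ⬝ᵥ (Sxx *ᵥ βstar))
        + βstar ⬝ᵥ (Sxx *ᵥ βstar) := by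
    rw [hδ]
    simp only [mulVec_sub, dotProduct_sub, sub_dotProduct]
    rw [hsym]; ring
  -- nonnegativity
  have hQ : 0 ≤ δ ⬝ᵥ (Sxx *ᵥ δ) := by
    have := hPSD.dotProduct_mulVec_nonneg δ
    simpa using this
  -- dual bound
  have hdualb : (s - Sxx *ᵥ βstar) ⬝ᵥ δ ≤ (lam / 2) * (a + b) := by
    have hab : a + b = ∑ i, |δ i| := by
      rw [haS, hbS, Finset.sum_add_sum_compl]
    rw [hab, Finset.mul_sum]
    unfold dotProduct
    apply Finset.sum_le_sum
    intro i _
    calc (s - Sxx *ᵥ βstar) i * δ i ≤ |(s - Sxx *ᵥ βstar) i * δ i| := le_abs_self _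
      _ = |s i - (Sxx *ᵥ βstar) i| * |δ i| := by rw [abs_mul]; rfl
      _ ≤ (lam / 2) * |δ i| := by
          apply mul_le_mul_of_nonneg_right (hdual i) (abs_nonneg _)
  -- l1 comparison
  have hl1 : lam * l1 βstar - lam * l1 βhat ≤ lam * (a - b) := by
    have h1 : l1 βstar - l1 βhat ≤ a - b := by
      have hsplit : ∀ v : Fin p → ℝ, l1 v = ∑ i ∈ S, |v i| + ∑ i ∈ Sᶜ, |v i| := by
        intro v; unfold l1; rw [Finset.sum_add_sum_compl]
      rw [hsplit βstar, hsplit βhat, haS, hbS]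
      have hS : ∑ i ∈ S, |βstar i| - ∑ i ∈ S, |βhat i| ≤ ∑ i ∈ S, |δ i| := by
        rw [← Finset.sum_sub_distrib]
        apply Finset.sum_le_sum
        intro i _
        calc |βstar i| - |βhat i| ≤ |βstar i - βhat i| := abs_sub_abs_le_abs_sub _ _
          _ = |δ i| := by rw [hδap, abs_sub_comm]
      have hSc : ∑ i ∈ Sᶜ, |βstar i| = 0 := by
        apply Finset.sum_eq_zero
        intro i hi
        rw [hsupp i (Finset.mem_compl.mp hi), abs_zero]
      have hSc2 : ∑ i ∈ Sᶜ, |βhat i| = ∑ i ∈ Sᶜ, |δ i| := by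
        apply Finset.sum_congr rfl
        intro i hi
        rw [hδap, hsupp i (Finset.mem_compl.mp hi), sub_zero]
      linarith
    nlinarith [h1, hlam.le]
  -- minimality at βstar
  have H := hmin βstar
  have key : (1 / 2) * (δ ⬝ᵥ (Sxx *ᵥ δ)) ≤ (3 * lam / 2) * a - (lam / 2) * b := by
    have hdot : (s - Sxx *ᵥ βstar) ⬝ᵥ δ
        = s ⬝ᵥ βhat - s ⬝ᵥ βstar - (βhat ⬝ᵥ (Sxx *ᵥ βstar))
          + βstar ⬝ᵥ (Sxx *ᵥ βstar) := by
      rw [hδ]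
      simp only [sub_dotProduct, dotProduct_sub]
      rw [dotProduct_comm (Sxx *ᵥ βstar) βhat, dotProduct_comm (Sxx *ᵥ βstar) βstar]
      ring
    have := hdualb
    rw [hdot] at this
    linarith [expand ▸ (by linarith [H, hl1, this] :
      (1 / 2) * (βhat ⬝ᵥ (Sxx *ᵥ βhat) - 2 * (βhat ⬝ᵥ (Sxx *ᵥ βstar))
        + βstar ⬝ᵥ (Sxx *ᵥ βstar)) ≤ (3 * lam / 2) * a - (lam / 2) * b)]
  refine ⟨key, ?_⟩
  nlinarith [key, hQ, hlam]
end

section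
/- Suppose EL(Δ) = (1/2) Tr(Δ^⊤ S_xx Δ Θ*) ≥ κ ⦀Δ⦀_F² for all Δ in the cone C(S), and let Θ̂ satisfy ⦀Θ̂ − Θ*⦀₂ ≤ Δ₁. Then the empirical excess loss with Θ̂ in place of Θ* satisfies (1/2) Tr(Δ^⊤ S_xx Δ Θ̂) ≥ (κ − ⦀S_xx⦀₂ Δ₁/2) ⦀Δ⦀_F² for all Δ ∈ C(S). -/
open Matrix

/-- The spectral norm (operator 2-norm) of a square real matrix. -/
noncomputable def spec {p : ℕ} (A : Matrix (Fin p) (Fin p) ℝ) : ℝ :=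
  ‖LinearMap.toContinuousLinearMap (Matrix.toEuclideanLin A)‖

/-- The Frobenius norm of a matrix. -/
noncomputable def frob {p q : ℕ} (A : Matrix (Fin p) (Fin q) ℝ) : ℝ :=
  Real.sqrt (∑ i, ∑ j, (A i j) ^ 2)

/-- The elementwise ℓ¹ norm of a matrix. -/
noncomputable def l11 {p q : ℕ} (M : Matrix (Fin p) (Fin q) ℝ) : ℝ :=
  ∑ i, ∑ j, |M i j|

/-- `restr2 M S` agrees with `M` on the index set `S` and is zero elsewhere. -/
def restr2 {p q : ℕ} (M : Matrix (Fin p) (Fin q) ℝ) (S : Finset (Fin p × Fin q)) :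
    Matrix (Fin p) (Fin q) ℝ :=
  fun i j => if (i, j) ∈ S then M i j else 0

set_option maxHeartbeats 1000000
set_option synthInstance.maxHeartbeats 400000

lemma frob_nonneg {p q : ℕ} (A : Matrix (Fin p) (Fin q) ℝ) : 0 ≤ frob A :=
  Real.sqrt_nonneg _

lemma spec_nonneg {p : ℕ} (A : Matrix (Fin p) (Fin p) ℝ) : 0 ≤ spec A :=
  norm_nonneg _

lemma frob_sq {p q : ℕ} (A : Matrix (Fin p) (Fin q) ℝ) :
    frob A ^ 2 = ∑ i, ∑ j, (A i j) ^ 2 := by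
  rw [frob, Real.sq_sqrt]
  positivity

lemma spec_mulVec {p : ℕ} (A : Matrix (Fin p) (Fin p) ℝ) (v : Fin p → ℝ) :
    Real.sqrt (∑ i, (A.mulVec v i) ^ 2) ≤ spec A * Real.sqrt (∑ i, (v i)^2) := by
  have h := (LinearMap.toContinuousLinearMap (Matrix.toEuclideanLin A)).le_opNorm
    ((WithLp.equiv 2 (Fin p → ℝ)).symm v)
  simpa [EuclideanSpace.norm_eq, Real.norm_eq_abs, sq_abs, spec,
    Matrix.toEuclideanLin_apply_piLp_toLp] using h

lemma frob_mul_le {p q : ℕ} (A : Matrix (Fin p) (Fin p) ℝ) (M : Matrix (Fin p) (Fin q) ℝ) :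
    frob (A * M) ≤ spec A * frob M := by
  have key : ∀ j, ∑ i, ((A*M) i j)^2 ≤ spec A ^2 * ∑ i, (M i j)^2 := by
    intro j
    have h := spec_mulVec A (fun i => M i j)
    have h2 : (∑ i, (A.mulVec (fun i => M i j) i)^2)
        ≤ (spec A * Real.sqrt (∑ i, (M i j)^2))^2 := by
      have e := Real.sq_sqrt (show (0:ℝ) ≤ ∑ i, (A.mulVec (fun i => M i j) i)^2 by positivity)
      nlinarith [Real.sqrt_nonneg (∑ i, (A.mulVec (fun i => M i j) i)^2)]
    calc ∑ i, ((A*M) i j)^2 = ∑ i, (A.mulVec (fun i => M i j) i)^2 := by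
          refine Finset.sum_congr rfl fun i _ => ?_
          simp [Matrix.mul_apply, Matrix.mulVec, dotProduct]
      _ ≤ (spec A * Real.sqrt (∑ i, (M i j)^2))^2 := h2
      _ = spec A^2 * ∑ i, (M i j)^2 := by
          rw [mul_pow, Real.sq_sqrt (by positivity)]
  have h1 : frob (A*M)^2 ≤ (spec A * frob M)^2 := by
    calc frob (A*M)^2 = ∑ j, ∑ i, ((A*M) i j)^2 := by
          rw [frob_sq]; exact Finset.sum_comm
      _ ≤ ∑ j, spec A^2 * ∑ i, (M i j)^2 := Finset.sum_le_sum fun j _ => key j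
      _ = spec A^2 * ∑ j, ∑ i, (M i j)^2 := by rw [Finset.mul_sum]
      _ = (spec A * frob M)^2 := by
          rw [mul_pow, frob_sq]; congr 1; exact Finset.sum_comm
  have h2 := Real.sqrt_le_sqrt h1
  rwa [Real.sqrt_sq (frob_nonneg _),
    Real.sqrt_sq (mul_nonneg (spec_nonneg _) (frob_nonneg _))] at h2

lemma frob_transpose {p q : ℕ} (M : Matrix (Fin p) (Fin q) ℝ) : frob Mᵀ = frob M := by
  rw [frob, frob]
  congr 1
  exact Finset.sum_comm

lemma trace_CS {p q : ℕ} (Δ N : Matrix (Fin p) (Fin q) ℝ) :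
    |Matrix.trace (Δᵀ * N)| ≤ frob Δ * frob N := by
  have ht : Matrix.trace (Δᵀ * N) = ∑ x : Fin p × Fin q, Δ x.1 x.2 * N x.1 x.2 := by
    rw [Matrix.trace, Fintype.sum_prod_type]
    simp only [Matrix.diag, Matrix.mul_apply, Matrix.transpose_apply]
    exact Finset.sum_comm
  have cs := Finset.sum_mul_sq_le_sq_mul_sq Finset.univ
    (fun x : Fin p × Fin q => Δ x.1 x.2) (fun x : Fin p × Fin q => N x.1 x.2)
  have hΔ : (∑ x : Fin p × Fin q, (Δ x.1 x.2)^2) = frob Δ ^ 2 := by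
    rw [frob_sq, Fintype.sum_prod_type]
  have hN : (∑ x : Fin p × Fin q, (N x.1 x.2)^2) = frob N ^ 2 := by
    rw [frob_sq, Fintype.sum_prod_type]
  rw [ht]
  have h2 : (∑ x : Fin p × Fin q, Δ x.1 x.2 * N x.1 x.2)^2 ≤ (frob Δ * frob N)^2 := by
    calc (∑ x : Fin p × Fin q, Δ x.1 x.2 * N x.1 x.2)^2
        ≤ (∑ x : Fin p × Fin q, (Δ x.1 x.2)^2) * ∑ x : Fin p × Fin q, (N x.1 x.2)^2 := cs
      _ = (frob Δ * frob N)^2 := by rw [hΔ, hN]; ring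
  have h3 := Real.sqrt_le_sqrt h2
  rwa [Real.sqrt_sq_eq_abs, Real.sqrt_sq (mul_nonneg (frob_nonneg _) (frob_nonneg _))] at h3

/-- Suppose `EL(Δ) = (1/2)Tr(Δᵀ S_xx Δ Θ*) ≥ κ⦀Δ⦀_F²` for all `Δ` in the cone
`C(S)`, and `⦀Θ̂ − Θ*⦀₂ ≤ Δ₁`. Then the empirical excess loss with `Θ̂` in place of `Θ*`
satisfies `(1/2)Tr(Δᵀ S_xx Δ Θ̂) ≥ (κ − ⦀S_xx⦀₂ Δ₁/2) ⦀Δ⦀_F²` on the cone. -/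
theorem empirical_RE_condition {p q : ℕ}
    (Sxx : Matrix (Fin p) (Fin p) ℝ) (hSxx : Sxx.PosSemidef)
    (Θstar Θhat : Matrix (Fin q) (Fin q) ℝ)
    (hΘstar : Θstar.IsSymm) (hΘhat : Θhat.IsSymm)
    (S : Finset (Fin p × Fin q)) (κ Δ₁ : ℝ) (hκ : 0 < κ) (hΔ₁ : 0 ≤ Δ₁)
    (hRE : ∀ Δ : Matrix (Fin p) (Fin q) ℝ,
      l11 (restr2 Δ Sᶜ) ≤ 3 * l11 (restr2 Δ S) →
      κ * frob Δ ^ 2 ≤ (1 / 2) * Matrix.trace (Δᵀ * Sxx * Δ * Θstar))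
    (hclose : spec (Θhat - Θstar) ≤ Δ₁) :
    ∀ Δ : Matrix (Fin p) (Fin q) ℝ,
      l11 (restr2 Δ Sᶜ) ≤ 3 * l11 (restr2 Δ S) →
      (κ - spec Sxx * Δ₁ / 2) * frob Δ ^ 2
        ≤ (1 / 2) * Matrix.trace (Δᵀ * Sxx * Δ * Θhat) := by
  intro Δ hcone
  set E := Θhat - Θstar with hE
  have hsplit : Matrix.trace (Δᵀ * Sxx * Δ * Θhat)
      = Matrix.trace (Δᵀ * Sxx * Δ * Θstar) + Matrix.trace (Δᵀ * Sxx * Δ * E) := by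
    rw [hE, Matrix.mul_sub, Matrix.trace_sub]; ring
  -- bound the error trace
  have hbound : |Matrix.trace (Δᵀ * Sxx * Δ * E)| ≤ spec Sxx * Δ₁ * frob Δ ^ 2 := by
    have h1 : Matrix.trace (Δᵀ * Sxx * Δ * E) = Matrix.trace (Δᵀ * (Sxx * (Δ * E))) := by
      rw [Matrix.mul_assoc, Matrix.mul_assoc]
    have h2 := trace_CS Δ (Sxx * (Δ * E))
    have h3 : frob (Sxx * (Δ * E)) ≤ spec Sxx * frob (Δ * E) := frob_mul_le _ _
    have h4 : frob (Δ * E) ≤ spec E * frob Δ := by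
      have hsymm : Eᵀ = E := by
        rw [hE]; exact (hΘhat.sub hΘstar)
      calc frob (Δ * E) = frob ((Δ * E)ᵀ) := (frob_transpose _).symm
        _ = frob (E * Δᵀ) := by rw [Matrix.transpose_mul, hsymm]
        _ ≤ spec E * frob Δᵀ := frob_mul_le _ _
        _ = spec E * frob Δ := by rw [frob_transpose]
    have h5 : spec E ≤ Δ₁ := hclose
    have hfnn := frob_nonneg Δ
    have hsnn := spec_nonneg Sxx
    have hEnn := spec_nonneg E
    calc |Matrix.trace (Δᵀ * Sxx * Δ * E)| ≤ frob Δ * frob (Sxx * (Δ * E)) := by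
          rw [h1] at *; exact h2
      _ ≤ spec Sxx * Δ₁ * frob Δ ^ 2 := by
          have h6 : frob (Sxx * (Δ * E)) ≤ spec Sxx * (Δ₁ * frob Δ) := by
            refine h3.trans ?_
            have := mul_le_mul_of_nonneg_right h5 hfnn
            nlinarith
          nlinarith [mul_le_mul_of_nonneg_left h6 hfnn, frob_nonneg (Sxx * (Δ * E))]
  have hre := hRE Δ hcone
  have habs := abs_le.mp hbound
  rw [hsplit]
  nlinarith [sq_nonneg (frob Δ)]
end
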